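/- Let D ∈ ℝ^{n×p} with K := D Dᵀ symmetric positive definite satisfying K ⪰ λ² I for λ > 0, and let ρ ∈ (0,1]. Then for every vector v ∈ ℝ^n, vᵀ D ((1-ρ)DᵀD + ρI)⁻¹ Dᵀ v ≥ (λ²/((1-ρ)λ² + ρ)) ‖v‖². -/

import Mathlib

open Matrix

private lemma psd_smul {m : ℕ} {A : Matrix (Fin m) (Fin m) ℝ} (hA : A.PosSemidef) {c : ℝ}
    (hc : 0 ≤ c) : (c • A).PosSemidef := by
  refine Matrix.PosSemidef.of_dotProduct_mulVec_nonneg ?_ (fun x => ?_)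
  · unfold Matrix.IsHermitian
    rw [conjTranspose_smul, hA.1]
    simp
  · rw [smul_mulVec, dotProduct_smul, smul_eq_mul]
    exact mul_nonneg hc (hA.dotProduct_mulVec_nonneg x)

private lemma pd_smul_one {m : ℕ} {c : ℝ} (hc : 0 < c) :
    (c • (1 : Matrix (Fin m) (Fin m) ℝ)).PosDef := by
  refine Matrix.PosDef.of_dotProduct_mulVec_pos ?_ (fun x hx => ?_)
  · unfold Matrix.IsHermitian
    rw [conjTranspose_smul, conjTranspose_one]
    simp
  · rw [smul_mulVec, one_mulVec, dotProduct_smul, smul_eq_mul]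
    have hxx : 0 < star x ⬝ᵥ x := dotProduct_star_self_pos_iff.mpr hx
    simp only [star_trivial] at hxx
    exact mul_pos hc hxx

/-- Lower bound on the quadratic form of the damped Gauss–Newton output-space operator:
if `K = D Dᵀ ⪰ λ² I` and `ρ ∈ (0,1]`, then for every `v`,
`vᵀ D ((1-ρ)DᵀD + ρI)⁻¹ Dᵀ v ≥ (λ²/((1-ρ)λ² + ρ)) ‖v‖²`. -/
theorem stmt3 {n p : ℕ} (D : Matrix (Fin n) (Fin p) ℝ) (lam : ℝ) (hlam : 0 < lam)
    (hKpd : (D * Dᵀ).PosDef)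
    (hK : (D * Dᵀ - lam ^ 2 • (1 : Matrix (Fin n) (Fin n) ℝ)).PosSemidef)
    (ρ : ℝ) (hρ : ρ ∈ Set.Ioc (0:ℝ) 1) (v : Fin n → ℝ) :
    lam ^ 2 / ((1 - ρ) * lam ^ 2 + ρ) * (v ⬝ᵥ v)
      ≤ v ⬝ᵥ (D * ((1 - ρ) • (Dᵀ * D) + ρ • (1 : Matrix (Fin p) (Fin p) ℝ))⁻¹ * Dᵀ).mulVec v := by
  obtain ⟨hρ0, hρ1⟩ := hρ
  have h1ρ : (0:ℝ) ≤ 1 - ρ := by linarith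
  set K : Matrix (Fin n) (Fin n) ℝ := D * Dᵀ with hKdef
  set M : Matrix (Fin p) (Fin p) ℝ := (1 - ρ) • (Dᵀ * D) + ρ • 1 with hMdef
  set N : Matrix (Fin n) (Fin n) ℝ := (1 - ρ) • K + ρ • 1 with hNdef
  have hd : (0:ℝ) < (1 - ρ) * lam ^ 2 + ρ := by nlinarith [sq_nonneg lam]
  -- positive definiteness of M and N
  have hDtD : (Dᵀ * D).PosSemidef := by
    have := posSemidef_conjTranspose_mul_self D
    rwa [conjTranspose_eq_transpose_of_trivial] at this
  have hMpd : M.PosDef :=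
    Matrix.PosDef.posSemidef_add (psd_smul hDtD h1ρ) (pd_smul_one hρ0)
  have hNpd : N.PosDef :=
    Matrix.PosDef.posSemidef_add (psd_smul hKpd.posSemidef h1ρ) (pd_smul_one hρ0)
  have hMdet : IsUnit M.det := (Matrix.isUnit_iff_isUnit_det M).mp hMpd.isUnit
  have hNdet : IsUnit N.det := (Matrix.isUnit_iff_isUnit_det N).mp hNpd.isUnit
  -- the intertwining identity
  have hDM : D * M = N * D := by
    rw [hMdef, hNdef, Matrix.mul_add, Matrix.add_mul, Matrix.mul_smul, Matrix.smul_mul,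
      Matrix.mul_smul, Matrix.smul_mul, Matrix.mul_one, Matrix.one_mul, ← Matrix.mul_assoc]
  have hDMinv : D * M⁻¹ = N⁻¹ * D := by
    have h1 : M * M⁻¹ = 1 := Matrix.mul_nonsing_inv _ hMdet
    have h2 : N⁻¹ * N = 1 := Matrix.nonsing_inv_mul _ hNdet
    calc D * M⁻¹ = (N⁻¹ * N) * (D * M⁻¹) := by rw [h2, Matrix.one_mul]
      _ = N⁻¹ * ((N * D) * M⁻¹) := by rw [Matrix.mul_assoc, Matrix.mul_assoc]
      _ = N⁻¹ * (D * (M * M⁻¹)) := by rw [← hDM, Matrix.mul_assoc]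
      _ = N⁻¹ * D := by rw [h1, Matrix.mul_one]
  have hmat : D * M⁻¹ * Dᵀ = N⁻¹ * K := by
    rw [hDMinv, Matrix.mul_assoc, ← hKdef]
  -- symmetry facts
  have hKsym : Kᵀ = K := by
    have := hKpd.isHermitian
    rwa [Matrix.IsHermitian, conjTranspose_eq_transpose_of_trivial] at this
  have hNsym : Nᵀ = N := by
    have := hNpd.isHermitian
    rwa [Matrix.IsHermitian, conjTranspose_eq_transpose_of_trivial] at this
  have hNinvsym : N⁻¹ᵀ = N⁻¹ := by
    rw [Matrix.transpose_nonsing_inv, hNsym]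
  -- substitution u = N⁻¹ v
  set u : Fin n → ℝ := N⁻¹ *ᵥ v with hudef
  have hvu : N *ᵥ u = v := by
    rw [hudef, Matrix.mulVec_mulVec, Matrix.mul_nonsing_inv _ hNdet, Matrix.one_mulVec]
  set k : Fin n → ℝ := K *ᵥ u with hkdef
  have hNu : N *ᵥ u = (1 - ρ) • k + ρ • u := by
    rw [hNdef, Matrix.add_mulVec, Matrix.smul_mulVec, Matrix.smul_mulVec,
      Matrix.one_mulVec, hkdef]
  -- rewrite the quadratic form
  have hudot : ∀ z : Fin n → ℝ, v ⬝ᵥ (N⁻¹ *ᵥ z) = u ⬝ᵥ z := by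
    intro z
    rw [Matrix.dotProduct_mulVec, ← Matrix.mulVec_transpose, hNinvsym, ← hudef]
  have hkdot : ∀ z : Fin n → ℝ, u ⬝ᵥ (K *ᵥ z) = k ⬝ᵥ z := by
    intro z
    rw [Matrix.dotProduct_mulVec, ← Matrix.mulVec_transpose, hKsym, ← hkdef]
  have hQ : v ⬝ᵥ (D * M⁻¹ * Dᵀ) *ᵥ v
      = (1 - ρ) * (k ⬝ᵥ k) + ρ * (k ⬝ᵥ u) := by
    rw [hmat, ← Matrix.mulVec_mulVec, hudot, ← hvu, hNu, hkdot, dotProduct_add,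
      dotProduct_smul, dotProduct_smul, smul_eq_mul, smul_eq_mul]
  have hvv : v ⬝ᵥ v = (1 - ρ) ^ 2 * (k ⬝ᵥ k) + 2 * ((1 - ρ) * ρ) * (k ⬝ᵥ u)
      + ρ ^ 2 * (u ⬝ᵥ u) := by
    rw [← hvu, hNu]
    simp only [dotProduct_add, add_dotProduct, dotProduct_smul, smul_dotProduct, smul_eq_mul]
    rw [dotProduct_comm u k]
    ring
  -- scalar inequalities from positive semidefiniteness
  set w : Fin n → ℝ := (K - lam ^ 2 • 1) *ᵥ u with hwdef
  have hw : w = k - lam ^ 2 • u := by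
    rw [hwdef, Matrix.sub_mulVec, Matrix.smul_mulVec, Matrix.one_mulVec, hkdef]
  have huw : 0 ≤ u ⬝ᵥ w := by simpa using hK.dotProduct_mulVec_nonneg u
  have hww : 0 ≤ w ⬝ᵥ w := by
    have : (0:ℝ) ≤ star w ⬝ᵥ w := dotProduct_star_self_nonneg w
    simpa using this
  have huu : 0 ≤ u ⬝ᵥ u := by
    have : (0:ℝ) ≤ star u ⬝ᵥ u := dotProduct_star_self_nonneg u
    simpa using this
  have hbe : lam ^ 2 * (u ⬝ᵥ u) ≤ k ⬝ᵥ u := by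
    have := huw
    rw [hw, dotProduct_sub, dotProduct_smul, smul_eq_mul, dotProduct_comm u k] at this
    linarith
  have hab : lam ^ 2 * (k ⬝ᵥ u) ≤ k ⬝ᵥ k := by
    have h1 : w ⬝ᵥ k = k ⬝ᵥ k - lam ^ 2 * (k ⬝ᵥ u) := by
      rw [hw, sub_dotProduct, smul_dotProduct, smul_eq_mul, dotProduct_comm u k]
    have h2 : 0 ≤ w ⬝ᵥ k := by
      have : w ⬝ᵥ k = w ⬝ᵥ w + lam ^ 2 * (w ⬝ᵥ u) := by
        have hk' : k = w + lam ^ 2 • u := by rw [hw]; abel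
        rw [hk', dotProduct_add, dotProduct_smul, smul_eq_mul]
      rw [this, dotProduct_comm w u]
      nlinarith [sq_nonneg lam]
    linarith
  -- conclude
  rw [hQ, hvv, div_mul_eq_mul_div, div_le_iff₀ hd]
  nlinarith [mul_nonneg (mul_nonneg hρ0.le h1ρ) (by linarith : (0:ℝ) ≤ k ⬝ᵥ k - lam ^ 2 * (k ⬝ᵥ u)),
    mul_nonneg (mul_nonneg hρ0.le hρ0.le) (by linarith : (0:ℝ) ≤ k ⬝ᵥ u - lam ^ 2 * (u ⬝ᵥ u))]
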